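/- In the regime α = ρλ with r > 0, ρ ∈ (0,1) fixed, the conditions λ₋ < λ < λ₊ hold for all sufficiently large λ, where λ∓ = (2(r+ρλ)²/r)(1 ∓ √(ρλ/(r+ρλ))); i.e., the nontrivial equilibrium is a stable spiral for all sufficiently large λ. -/
import Mathlib


open Filter

theorem stable_spiral_for_large_lambda (r ρ : ℝ) (hr : 0 < r) (hρ : ρ ∈ Set.Ioo (0:ℝ) 1) :
    ∀ᶠ lam : ℝ in atTop,
      (2 * (r + ρ * lam) ^ 2 / r) * (1 - Real.sqrt (ρ * lam / (r + ρ * lam))) < lam ∧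
      lam < (2 * (r + ρ * lam) ^ 2 / r) * (1 + Real.sqrt (ρ * lam / (r + ρ * lam))) := by
  obtain ⟨hρ0, hρ1⟩ := hρ
  set c : ℝ := ((1 + ρ) / 2) ^ 2 with hc
  have hc1 : c < 1 := by nlinarith
  have hc0 : 0 < c := by positivity
  set N : ℝ := max (max (r * c / (ρ * (1 - c)) + 1) (4 * r / (3 * (1 - ρ)) + 1)) (r / (2 * ρ ^ 2) + 1) with hN
  filter_upwards [eventually_ge_atTop N] with lam hlam
  have h1 : r * c / (ρ * (1 - c)) + 1 ≤ lam := le_trans (le_trans (le_max_left _ _) (le_max_left _ _)) hlam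
  have h2 : 4 * r / (3 * (1 - ρ)) + 1 ≤ lam := le_trans (le_trans (le_max_right _ _) (le_max_left _ _)) hlam
  have h3 : r / (2 * ρ ^ 2) + 1 ≤ lam := le_trans (le_max_right _ _) hlam
  have hlam0 : 0 < lam := by
    have : 0 ≤ r / (2 * ρ ^ 2) := by positivity
    linarith
  set A : ℝ := r + ρ * lam with hA
  have hA0 : 0 < A := by have : 0 < ρ * lam := mul_pos hρ0 hlam0; simp [hA]; linarith
  set s : ℝ := Real.sqrt (ρ * lam / A) with hs
  have hs0 : 0 ≤ s := Real.sqrt_nonneg _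
  have hs2 : s ^ 2 = ρ * lam / A := Real.sq_sqrt (by positivity)
  have hs2' : s ^ 2 * A = ρ * lam := by rw [hs2]; field_simp
  -- s ≥ (1+ρ)/2
  have hsge : (1 + ρ) / 2 ≤ s := by
    rw [hs]
    rw [show (1 + ρ) / 2 = Real.sqrt c by rw [hc, Real.sqrt_sq (by linarith)]]
    apply Real.sqrt_le_sqrt
    rw [le_div_iff₀ hA0]
    have hthresh : r * c / (ρ * (1 - c)) < lam := by linarith
    have := (div_lt_iff₀ (mul_pos hρ0 (by linarith) : 0 < ρ * (1 - c))).mp hthresh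
    simp only [hA]; nlinarith
  constructor
  · -- left inequality
    rw [div_mul_eq_mul_div, div_lt_iff₀ hr]
    -- suffices 2*A*r < lam*r*(1+s)
    have hkey : 2 * A * r < lam * r * (1 + s) := by
      have hthresh : 4 * r / (3 * (1 - ρ)) < lam := by linarith
      have := (div_lt_iff₀ (by nlinarith : (0:ℝ) < 3 * (1 - ρ))).mp hthresh
      simp only [hA]
      nlinarith [mul_nonneg (mul_nonneg hlam0.le hr.le) (by linarith : (0:ℝ) ≤ s - (1 + ρ) / 2), mul_pos hr hlam0, mul_lt_mul_of_pos_left this hr]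
    have hfact : 2 * A ^ 2 * (1 - s) * (1 + s) = 2 * A * r := by
      have : 2 * A ^ 2 * (1 - s) * (1 + s) = 2 * A * (A - s ^ 2 * A) := by ring
      rw [this, hs2']; simp only [hA]; ring
    have h1s : 0 < 1 + s := by linarith
    have := hfact.trans_lt hkey
    have := lt_of_mul_lt_mul_right this (le_of_lt h1s)
    nlinarith
  · -- right inequality
    have hthresh : r / (2 * ρ ^ 2) < lam := by linarith
    have h2r : r < lam * (2 * ρ ^ 2) := (div_lt_iff₀ (by positivity)).mp hthresh
    have hlt : lam < 2 * A ^ 2 / r := by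
      rw [lt_div_iff₀ hr]
      have hge : ρ * lam ≤ A := by simp only [hA]; linarith
      have hsq : (ρ * lam) ^ 2 ≤ A ^ 2 := pow_le_pow_left₀ (by positivity) hge 2
      calc lam * r < lam * (lam * (2 * ρ ^ 2)) := mul_lt_mul_of_pos_left h2r hlam0
        _ = 2 * (ρ * lam) ^ 2 := by ring
        _ ≤ 2 * A ^ 2 := by linarith
    calc lam < 2 * A ^ 2 / r := hlt
      _ ≤ 2 * A ^ 2 / r * (1 + s) := le_mul_of_one_le_right (by positivity) (by linarith)
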